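/- For positive invertible operators A, B and p ∈ (0,1), the Furuta parametric relative operator entropy satisfies the two-sided bound (1/2)[(A♯ₚB)T₁₋ₚ(B⁻¹|A⁻¹)(A♯ₚB) + Tₚ(A|B)] ≤ Sₚ(A|B) ≤ (1/2)[−T₁₋ₚ(B|A) − (A♯ₚB)Tₚ(A⁻¹|B⁻¹)(A♯ₚB)] in the Loewner order. -/

import Mathlib

open scoped Real

variable {H : Type*} [NormedAddCommGroup H] [InnerProductSpace ℂ H] [CompleteSpace H]

/-- Square root via continuous functional calculus. -/
noncomputable def opSqrt (A : H →L[ℂ] H) : H →L[ℂ] H := cfc Real.sqrt A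

/-- Real power via continuous functional calculus. -/
noncomputable def opRpow (A : H →L[ℂ] H) (p : ℝ) : H →L[ℂ] H :=
  cfc (fun x : ℝ => x ^ p) A

/-- Logarithm via continuous functional calculus. -/
noncomputable def opLog (A : H →L[ℂ] H) : H →L[ℂ] H := cfc Real.log A

/-- Operator inverse (junk value `0` if not invertible). -/
noncomputable def opInv (A : H →L[ℂ] H) : H →L[ℂ] H := Ring.inverse A

/-- `A^{-1/2}`. -/
noncomputable def opInvSqrt (A : H →L[ℂ] H) : H →L[ℂ] H := opInv (opSqrt A)

/-- Weighted arithmetic mean `A ∇ₚ B`. -/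
noncomputable def wNabla (p : ℝ) (A B : H →L[ℂ] H) : H →L[ℂ] H := (1 - p) • A + p • B

/-- Weighted harmonic mean `A !ₚ B`. -/
noncomputable def wHarm (p : ℝ) (A B : H →L[ℂ] H) : H →L[ℂ] H :=
  opInv ((1 - p) • opInv A + p • opInv B)

/-- Weighted geometric mean `A ♯ₚ B`. -/
noncomputable def wGeom (p : ℝ) (A B : H →L[ℂ] H) : H →L[ℂ] H :=
  opSqrt A * opRpow (opInvSqrt A * B * opInvSqrt A) p * opSqrt A

/-- Relative operator entropy `S(A|B)`. -/
noncomputable def relEntropy (A B : H →L[ℂ] H) : H →L[ℂ] H :=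
  opSqrt A * opLog (opInvSqrt A * B * opInvSqrt A) * opSqrt A

/-- Furuta parametric relative operator entropy `Sₚ(A|B)`. -/
noncomputable def furutaEntropy (p : ℝ) (A B : H →L[ℂ] H) : H →L[ℂ] H :=
  opSqrt A * (opRpow (opInvSqrt A * B * opInvSqrt A) p *
    opLog (opInvSqrt A * B * opInvSqrt A)) * opSqrt A

/-- Tsallis relative operator entropy `Tₚ(A|B)`. -/
noncomputable def tsallisEntropy (p : ℝ) (A B : H →L[ℂ] H) : H →L[ℂ] H :=
  p⁻¹ • (wGeom p A B - A)
open Real in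
lemma scalar_facts {p x : ℝ} (hp : 0 < p) (hp1 : p < 1) (hx : 0 < x) :
    (1/2 : ℝ) * (x^p * ((1-p)⁻¹ * (x^(-p) - x⁻¹)) * x^p + p⁻¹ * (x^p - 1)) ≤ x^p * Real.log x ∧
    x^p * Real.log x ≤ (1/2 : ℝ) * (-((1-p)⁻¹ * (x^p - x)) - x^p * (p⁻¹ * (x^(-p) - 1)) * x^p) := by
  have hq : 0 < 1 - p := by linarith
  set t := x ^ p with htdef
  set u := x ^ (1-p) with hudef
  have ht : 0 < t := rpow_pos_of_pos hx p
  have hu : 0 < u := rpow_pos_of_pos hx (1-p)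
  have htu : t * u = x := by
    rw [htdef, hudef, ← rpow_add hx]; norm_num
  have hxm : x ^ (-p) = t⁻¹ := by rw [htdef, ← rpow_neg hx.le]
  have hlogt : Real.log t = p * Real.log x := log_rpow hx p
  have hlogu : Real.log u = (1-p) * Real.log x := log_rpow hx (1-p)
  have l1 : Real.log t ≤ t - 1 := log_le_sub_one_of_pos ht
  have l2 : 1 - t⁻¹ ≤ Real.log t := by
    have := log_le_sub_one_of_pos (inv_pos.mpr ht)
    rw [log_inv] at this; linarith
  have l3 : Real.log u ≤ u - 1 := log_le_sub_one_of_pos hu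
  have l4 : 1 - u⁻¹ ≤ Real.log u := by
    have := log_le_sub_one_of_pos (inv_pos.mpr hu)
    rw [log_inv] at this; linarith
  constructor
  · have k1 : (1-p)⁻¹ * (t - t*u⁻¹) ≤ t * Real.log x := by
      have h5 : t * (1 - u⁻¹) ≤ t * Real.log u := by nlinarith
      rw [hlogu] at h5
      have := mul_le_mul_of_nonneg_left h5 (le_of_lt (inv_pos.mpr hq))
      calc (1-p)⁻¹ * (t - t*u⁻¹) = (1-p)⁻¹ * (t * (1-u⁻¹)) := by ring
        _ ≤ (1-p)⁻¹ * (t * ((1-p) * Real.log x)) := this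
        _ = t * Real.log x := by field_simp
    have k2 : p⁻¹ * (t - 1) ≤ t * Real.log x := by
      have h5 : t * (1 - t⁻¹) ≤ t * Real.log t := by nlinarith
      rw [hlogt] at h5
      have h6 : t * (1 - t⁻¹) = t - 1 := by field_simp
      have := mul_le_mul_of_nonneg_left h5 (le_of_lt (inv_pos.mpr hp))
      calc p⁻¹ * (t - 1) = p⁻¹ * (t * (1 - t⁻¹)) := by rw [h6]
        _ ≤ p⁻¹ * (t * (p * Real.log x)) := this
        _ = t * Real.log x := by field_simp
    have heq : (1/2 : ℝ) * (t * ((1-p)⁻¹ * (x^(-p) - x⁻¹)) * t + p⁻¹ * (t - 1))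
        = (1/2) * ((1-p)⁻¹ * (t - t*u⁻¹) + p⁻¹ * (t - 1)) := by
      rw [hxm, ← htu]
      field_simp
    rw [heq]; linarith
  · have k1 : t * Real.log x ≤ (1-p)⁻¹ * (t*u - t) := by
      have h5 : t * Real.log u ≤ t * (u - 1) := by nlinarith
      rw [hlogu] at h5
      have := mul_le_mul_of_nonneg_left h5 (le_of_lt (inv_pos.mpr hq))
      calc t * Real.log x = (1-p)⁻¹ * (t * ((1-p) * Real.log x)) := by field_simp
        _ ≤ (1-p)⁻¹ * (t * (u-1)) := this
        _ = (1-p)⁻¹ * (t*u - t) := by ring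
    have k2 : t * Real.log x ≤ p⁻¹ * (t*t - t) := by
      have h5 : t * Real.log t ≤ t * (t - 1) := by nlinarith
      rw [hlogt] at h5
      have := mul_le_mul_of_nonneg_left h5 (le_of_lt (inv_pos.mpr hp))
      calc t * Real.log x = p⁻¹ * (t * (p * Real.log x)) := by field_simp
        _ ≤ p⁻¹ * (t * (t-1)) := this
        _ = p⁻¹ * (t*t - t) := by ring
    have heq : (1/2 : ℝ) * (-((1-p)⁻¹ * (t - x)) - t * (p⁻¹ * (x^(-p) - 1)) * t)
        = (1/2) * ((1-p)⁻¹ * (t*u - t) + p⁻¹ * (t*t - t)) := by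
      rw [hxm, ← htu]
      field_simp
      ring
    rw [heq]; linarith

lemma spec_pos {a : H →L[ℂ] H} (ha : 0 ≤ a) (ha' : IsUnit a) : ∀ x ∈ spectrum ℝ a, 0 < x := by
  intro x hx
  rcases (spectrum_nonneg_of_nonneg ha hx).eq_or_lt with h | h
  · exact absurd (h ▸ hx) (spectrum.zero_notMem_iff ℝ |>.mpr ha')
  · exact h

lemma inv_helper {x y : H →L[ℂ] H} (h1 : x * y = 1) (h2 : y * x = 1) : Ring.inverse x = y := by
  have h : x = ((⟨x, y, h1, h2⟩ : (H →L[ℂ] H)ˣ) : H →L[ℂ] H) := rfl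
  rw [h, Ring.inverse_unit]; rfl

lemma cancel_mid {u v : H →L[ℂ] H} (h : u * v = 1) (z : H →L[ℂ] H) : u * (v * z) = z := by
  rw [← mul_assoc, h, one_mul]

/-- conjugation by a unitary commutes with cfc -/
lemma cfc_conj_unitary (u : H →L[ℂ] H) (hu1 : u * star u = 1) (hu2 : star u * u = 1)
    (f : ℝ → ℝ) (a : H →L[ℂ] H) (hf : ContinuousOn f (spectrum ℝ a))
    (ha : IsSelfAdjoint a) :
    cfc f (u * a * star u) = u * cfc f a * star u := by
  let φ : (H →L[ℂ] H) →⋆ₐ[ℂ] (H →L[ℂ] H) :=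
  { toFun := fun x => u * x * star u
    map_one' := by show u * 1 * star u = 1; rw [mul_one, hu1]
    map_mul' := fun x y => by
      show u * (x * y) * star u = (u * x * star u) * (u * y * star u)
      simp only [mul_assoc, cancel_mid hu2]
    map_zero' := by show u * 0 * star u = 0; simp
    map_add' := fun x y => by
      show u * (x + y) * star u = u * x * star u + u * y * star u
      noncomm_ring
    commutes' := fun z => by
      show u * (algebraMap ℂ (H →L[ℂ] H) z) * star u = algebraMap ℂ (H →L[ℂ] H) z
      simp only [Algebra.algebraMap_eq_smul_one]
      rw [mul_smul_comm, mul_one, smul_mul_assoc, hu1]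
    map_star' := fun x => by
      show u * star x * star u = star (u * x * star u)
      simp [mul_assoc] }
  have hφc : Continuous φ := by
    show Continuous fun x : H →L[ℂ] H => u * x * star u
    fun_prop
  have hφa : IsSelfAdjoint (φ a) := by
    show IsSelfAdjoint (u * a * star u)
    rw [IsSelfAdjoint, star_mul, star_mul, star_star, ha.star_eq, mul_assoc]
  exact (StarAlgHom.map_cfc φ f a hf hφc ha hφa).symm

set_option linter.unusedSectionVars false

lemma intertwine {T : H →L[ℂ] H} (hT : IsUnit T) (f : ℝ → ℝ)
    (hf : ContinuousOn f (spectrum ℝ (star T * T))) :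
    T * cfc f (star T * T) = cfc f (T * star T) * T := by
  set c : H →L[ℂ] H := star T * T with hcdef
  have hc0 : 0 ≤ c := star_mul_self_nonneg T
  have hcu : IsUnit c := hT.star.mul hT
  have hcsa : IsSelfAdjoint c := IsSelfAdjoint.star_mul_self T
  have hpos : ∀ x ∈ spectrum ℝ c, 0 < x := spec_pos hc0 hcu
  have hsc : ContinuousOn Real.sqrt (spectrum ℝ c) := Real.continuous_sqrt.continuousOn
  have hsne : ∀ x ∈ spectrum ℝ c, Real.sqrt x ≠ 0 :=
    fun x hx => ne_of_gt (Real.sqrt_pos.mpr (hpos x hx))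
  have hic : ContinuousOn (fun x => (Real.sqrt x)⁻¹) (spectrum ℝ c) := hsc.inv₀ hsne
  set sq : H →L[ℂ] H := cfc Real.sqrt c with hsqdef
  set h : H →L[ℂ] H := cfc (fun x => (Real.sqrt x)⁻¹) c with hhdef
  have hhsa : IsSelfAdjoint h := cfc_predicate _ c
  have hhs : h * sq = 1 := by
    rw [hsqdef, hhdef, ← cfc_mul _ _ c hic hsc]
    rw [cfc_congr (g := fun _ => 1) (fun x hx => inv_mul_cancel₀ (hsne x hx))]
    exact cfc_const_one ℝ c
  have hsh : sq * h = 1 := by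
    rw [hsqdef, hhdef, ← cfc_mul _ _ c hsc hic]
    rw [cfc_congr (g := fun _ => 1) (fun x hx => mul_inv_cancel₀ (hsne x hx))]
    exact cfc_const_one ℝ c
  have hh_unit : IsUnit h := ⟨⟨h, sq, hhs, hsh⟩, rfl⟩
  set u : H →L[ℂ] H := T * h with hudef
  have hstaru : star u = h * star T := by rw [hudef, star_mul, hhsa.star_eq]
  have hhc : h * c = sq := by
    conv_lhs => rw [show c = cfc (fun x : ℝ => x) c from (cfc_id ℝ c hcsa).symm]
    rw [hsqdef, hhdef, ← cfc_mul _ _ c hic (continuousOn_id' _)]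
    refine cfc_congr fun x hx => ?_
    show (Real.sqrt x)⁻¹ * x = Real.sqrt x
    rw [eq_comm, eq_inv_mul_iff_mul_eq₀ (hsne x hx), Real.mul_self_sqrt (hpos x hx).le]
  have hch : h * c * h = 1 := by rw [hhc, hsh]
  have hu2 : star u * u = 1 := by
    rw [hstaru, hudef]
    calc h * star T * (T * h) = h * (star T * T) * h := by simp only [mul_assoc]
      _ = h * c * h := by rw [← hcdef]
      _ = 1 := hch
  have hu_unit : IsUnit u := hT.mul hh_unit
  have hu1 : u * star u = 1 := by
    have h1 : star u = Ring.inverse u := by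
      have h2 := Ring.mul_inverse_cancel u hu_unit
      calc star u = star u * (u * Ring.inverse u) := by rw [h2, mul_one]
        _ = (star u * u) * Ring.inverse u := (mul_assoc _ _ _).symm
        _ = Ring.inverse u := by rw [hu2, one_mul]
    rw [h1]; exact Ring.mul_inverse_cancel u hu_unit
  have hucu : u * c * star u = T * star T := by
    rw [hudef, hstaru]
    calc T * h * c * (h * star T) = T * (h * c * h) * star T := by simp only [mul_assoc]
      _ = T * star T := by rw [hch, mul_one]
  have key : cfc f (T * star T) = u * cfc f c * star u := by
    rw [← hucu]
    exact cfc_conj_unitary u hu1 hu2 f c hf hcsa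
  rw [key]
  have hsuT : star u * T = sq := by
    rw [hstaru]
    calc h * star T * T = h * c := by rw [mul_assoc, ← hcdef]
      _ = sq := hhc
  have hmid : h * cfc f c * sq = cfc f c := by
    rw [hhdef, hsqdef, ← cfc_mul _ _ c hic hf, ← cfc_mul (fun x => (Real.sqrt x)⁻¹ * f x) _ c (hic.mul hf) hsc]
    refine cfc_congr fun x hx => ?_
    show (Real.sqrt x)⁻¹ * f x * Real.sqrt x = f x
    field_simp
    exact mul_div_cancel_left₀ (f x) (hsne x hx)
  calc T * cfc f c = T * (h * cfc f c * sq) := by rw [hmid]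
    _ = u * cfc f c * (star u * T) := by rw [hudef, hsuT]; simp only [mul_assoc]
    _ = u * cfc f c * star u * T := (mul_assoc _ _ _).symm

section helpers
variable {a : H →L[ℂ] H}

lemma sqrt_contOn : ContinuousOn Real.sqrt (spectrum ℝ a) := Real.continuous_sqrt.continuousOn

lemma sqrt_ne (ha : 0 ≤ a) (ha' : IsUnit a) (x : ℝ) (hx : x ∈ spectrum ℝ a) : Real.sqrt x ≠ 0 :=
  ne_of_gt (Real.sqrt_pos.mpr (spec_pos ha ha' x hx))

lemma sqrtinv_contOn (ha : 0 ≤ a) (ha' : IsUnit a) : ContinuousOn (fun x => (Real.sqrt x)⁻¹) (spectrum ℝ a) :=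
  sqrt_contOn.inv₀ (sqrt_ne ha ha')

lemma opSqrt_nonneg (ha : 0 ≤ a) : 0 ≤ opSqrt a := cfc_nonneg fun x _ => Real.sqrt_nonneg x

lemma opSqrt_sa : IsSelfAdjoint (opSqrt a) := cfc_predicate _ a

lemma opSqrt_mul_self (ha : 0 ≤ a) : opSqrt a * opSqrt a = a := by
  rw [opSqrt, ← cfc_mul _ _ a sqrt_contOn sqrt_contOn]
  conv_rhs => rw [← cfc_id ℝ a ha.isSelfAdjoint]
  exact cfc_congr fun x hx => Real.mul_self_sqrt (spectrum_nonneg_of_nonneg ha hx)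

lemma opSqrt_isUnit (ha : 0 ≤ a) (ha' : IsUnit a) : IsUnit (opSqrt a) :=
  (isUnit_cfc_iff Real.sqrt a sqrt_contOn ha.isSelfAdjoint).mpr (sqrt_ne ha ha')

lemma opInvSqrt_eq_cfc (ha : 0 ≤ a) (ha' : IsUnit a) : opInvSqrt a = cfc (fun x => (Real.sqrt x)⁻¹) a := by
  rw [opInvSqrt, opInv, opSqrt]
  refine inv_helper ?_ ?_ <;>
    rw [← cfc_mul _ _ a (by first | exact sqrt_contOn | exact sqrtinv_contOn ha ha')
      (by first | exact sqrt_contOn | exact sqrtinv_contOn ha ha')] <;>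
    refine Eq.trans (cfc_congr (g := fun _ => 1) fun x hx => ?_) (cfc_const_one ℝ a ha.isSelfAdjoint)
  · exact mul_inv_cancel₀ (sqrt_ne ha ha' x hx)
  · exact inv_mul_cancel₀ (sqrt_ne ha ha' x hx)

lemma opSqrt_mul_opInvSqrt (ha : 0 ≤ a) (ha' : IsUnit a) : opSqrt a * opInvSqrt a = 1 :=
  Ring.mul_inverse_cancel _ (opSqrt_isUnit ha ha')

lemma opInvSqrt_mul_opSqrt (ha : 0 ≤ a) (ha' : IsUnit a) : opInvSqrt a * opSqrt a = 1 :=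
  Ring.inverse_mul_cancel _ (opSqrt_isUnit ha ha')

lemma opInvSqrt_sa (ha : 0 ≤ a) (ha' : IsUnit a) : IsSelfAdjoint (opInvSqrt a) := by
  rw [opInvSqrt_eq_cfc ha ha']; exact cfc_predicate _ a

lemma opInvSqrt_isUnit (ha : 0 ≤ a) (ha' : IsUnit a) : IsUnit (opInvSqrt a) :=
  ⟨⟨opInvSqrt a, opSqrt a, opInvSqrt_mul_opSqrt ha ha', opSqrt_mul_opInvSqrt ha ha'⟩, rfl⟩

lemma ringInverse_eq_cfc_inv (ha : 0 ≤ a) (ha' : IsUnit a) : Ring.inverse a = cfc (fun x : ℝ => x⁻¹) a := by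
  have hinv : ContinuousOn (fun x : ℝ => x⁻¹) (spectrum ℝ a) :=
    continuousOn_id.inv₀ fun x hx => ne_of_gt (spec_pos ha ha' x hx)
  refine inv_helper ?_ ?_
  · nth_rewrite 1 [show a = cfc (fun x : ℝ => x) a from (cfc_id ℝ a ha.isSelfAdjoint).symm]
    rw [← cfc_mul _ _ a (continuousOn_id' _) hinv]
    exact Eq.trans (cfc_congr fun x hx => mul_inv_cancel₀ (ne_of_gt (spec_pos ha ha' x hx)))
      (cfc_const_one ℝ a ha.isSelfAdjoint)
  · nth_rewrite 2 [show a = cfc (fun x : ℝ => x) a from (cfc_id ℝ a ha.isSelfAdjoint).symm]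
    rw [← cfc_mul _ _ a hinv (continuousOn_id' _)]
    exact Eq.trans (cfc_congr fun x hx => inv_mul_cancel₀ (ne_of_gt (spec_pos ha ha' x hx)))
      (cfc_const_one ℝ a ha.isSelfAdjoint)

lemma opInv_nonneg (ha : 0 ≤ a) (ha' : IsUnit a) : 0 ≤ opInv a := by
  rw [opInv, ringInverse_eq_cfc_inv ha ha']
  exact cfc_nonneg fun x hx => inv_nonneg.mpr (spectrum_nonneg_of_nonneg ha hx)

lemma opInv_isUnit (ha : 0 ≤ a) (ha' : IsUnit a) : IsUnit (opInv a) := by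
  rw [opInv]
  exact ⟨⟨Ring.inverse a, a, Ring.inverse_mul_cancel _ ha', Ring.mul_inverse_cancel _ ha'⟩, rfl⟩

lemma opSqrt_opInv (ha : 0 ≤ a) (ha' : IsUnit a) : opSqrt (opInv a) = opInvSqrt a := by
  have hinv : ContinuousOn (fun x : ℝ => x⁻¹) (spectrum ℝ a) :=
    continuousOn_id.inv₀ fun x hx => ne_of_gt (spec_pos ha ha' x hx)
  rw [opSqrt, opInv, ringInverse_eq_cfc_inv ha ha',
    ← cfc_comp' Real.sqrt (fun x : ℝ => x⁻¹) a Real.continuous_sqrt.continuousOn hinv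
      ha.isSelfAdjoint,
    opInvSqrt_eq_cfc ha ha']
  exact cfc_congr fun x _ => Real.sqrt_inv x

lemma opInvSqrt_opInv (ha : 0 ≤ a) (ha' : IsUnit a) : opInvSqrt (opInv a) = opSqrt a := by
  rw [opInvSqrt, opSqrt_opInv ha ha', opInvSqrt, opInv]
  exact inv_helper (opInvSqrt_mul_opSqrt ha ha') (opSqrt_mul_opInvSqrt ha ha')

end helpers


section combos
variable {H : Type*} [NormedAddCommGroup H] [InnerProductSpace ℂ H] [CompleteSpace H]
set_option linter.unusedSectionVars false

lemma cfc_smul_sub (t : ℝ) (f g : ℝ → ℝ) (a : H →L[ℂ] H)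
    (hf : ContinuousOn f (spectrum ℝ a)) (hg : ContinuousOn g (spectrum ℝ a)) :
    cfc (fun x => t * (f x - g x)) a = t • (cfc f a - cfc g a) := by
  rw [← cfc_sub _ _ a hf hg, ← cfc_smul t (fun x => f x - g x) a (hf.sub hg)]
  refine cfc_congr fun x _ => ?_
  rw [smul_eq_mul]

lemma cfc_smul_add (t : ℝ) (f g : ℝ → ℝ) (a : H →L[ℂ] H)
    (hf : ContinuousOn f (spectrum ℝ a)) (hg : ContinuousOn g (spectrum ℝ a)) :
    cfc (fun x => t * (f x + g x)) a = t • (cfc f a + cfc g a) := by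
  rw [← cfc_add (a := a) f g hf hg, ← cfc_smul t (fun x => f x + g x) a (hf.add hg)]
  refine cfc_congr fun x _ => ?_
  rw [smul_eq_mul]

lemma cfc_smul_negsub (t : ℝ) (f g : ℝ → ℝ) (a : H →L[ℂ] H)
    (hf : ContinuousOn f (spectrum ℝ a)) (hg : ContinuousOn g (spectrum ℝ a)) :
    cfc (fun x => t * (-f x - g x)) a = t • (-cfc f a - cfc g a) := by
  rw [← cfc_neg f a, ← cfc_sub (fun x => -f x) _ a hf.neg hg, ← cfc_smul t (fun x => -f x - g x) a (hf.neg.sub hg)]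
  refine cfc_congr fun x _ => ?_
  rw [smul_eq_mul]

lemma conj_smul_sub (t : ℝ) (s x y : H →L[ℂ] H) :
    s * (t • (x - y)) * s = t • (s * x * s - s * y * s) := by
  rw [mul_smul_comm, smul_mul_assoc, mul_sub, sub_mul]

lemma conj_smul_add (t : ℝ) (s x y : H →L[ℂ] H) :
    s * (t • (x + y)) * s = t • (s * x * s + s * y * s) := by
  rw [mul_smul_comm, smul_mul_assoc, mul_add, add_mul]

lemma conj_smul_negsub (t : ℝ) (s x y : H →L[ℂ] H) :
    s * (t • (-x - y)) * s = t • (-(s * x * s) - s * y * s) := by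
  rw [mul_smul_comm, smul_mul_assoc, mul_sub, sub_mul, mul_neg, neg_mul]

end combos

set_option maxHeartbeats 2000000 in
/-- Two-sided bound for the Furuta entropy in terms of Tsallis relative
operator entropies:
`(1/2)[(A♯ₚB)T₁₋ₚ(B⁻¹|A⁻¹)(A♯ₚB) + Tₚ(A|B)] ≤ Sₚ(A|B)
  ≤ (1/2)[−T₁₋ₚ(B|A) − (A♯ₚB)Tₚ(A⁻¹|B⁻¹)(A♯ₚB)]`. -/
theorem furutaEntropy_tsallis_bounds (A B : H →L[ℂ] H) (hA : 0 ≤ A)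
    (hA' : IsUnit A) (hB : 0 ≤ B) (hB' : IsUnit B) (p : ℝ)
    (hp : p ∈ Set.Ioo (0:ℝ) 1) :
    (1/2 : ℝ) • (wGeom p A B * tsallisEntropy (1 - p) (opInv B) (opInv A) * wGeom p A B
        + tsallisEntropy p A B) ≤ furutaEntropy p A B ∧
      furutaEntropy p A B ≤
        (1/2 : ℝ) • (-tsallisEntropy (1 - p) B A
          - wGeom p A B * tsallisEntropy p (opInv A) (opInv B) * wGeom p A B) := by
  obtain ⟨hp0, hp1⟩ := hp
  have hq0 : (0:ℝ) < 1 - p := by linarith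
  set s : H →L[ℂ] H := opSqrt A with hs
  set s' : H →L[ℂ] H := opInvSqrt A with hs'
  set r : H →L[ℂ] H := opSqrt B with hr
  set r' : H →L[ℂ] H := opInvSqrt B with hr'
  have h1 : s * s' = 1 := opSqrt_mul_opInvSqrt hA hA'
  have h2 : s' * s = 1 := opInvSqrt_mul_opSqrt hA hA'
  have h3 : r * r' = 1 := opSqrt_mul_opInvSqrt hB hB'
  have h4 : r' * r = 1 := opInvSqrt_mul_opSqrt hB hB'
  have hs2 : s * s = A := opSqrt_mul_self hA
  have hr2 : r * r = B := opSqrt_mul_self hB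
  have hssa : star s = s := (opSqrt_sa (a := A)).star_eq
  have hrsa : star r = r := (opSqrt_sa (a := B)).star_eq
  have hs'sa : star s' = s' := (opInvSqrt_sa hA hA').star_eq
  have hr'sa : star r' = r' := (opInvSqrt_sa hB hB').star_eq
  have hs'u : IsUnit s' := opInvSqrt_isUnit hA hA'
  have hr'u : IsUnit r' := opInvSqrt_isUnit hB hB'
  have hru : IsUnit r := opSqrt_isUnit hB hB'
  set c : H →L[ℂ] H := s' * B * s' with hc
  have hc0 : 0 ≤ c := by
    have := star_left_conjugate_nonneg hB s'
    rw [hs'sa] at this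
    exact this
  have hcu : IsUnit c := (hs'u.mul hB').mul hs'u
  have hcsa : IsSelfAdjoint c := hc0.isSelfAdjoint
  have hcpos : ∀ x ∈ spectrum ℝ c, 0 < x := spec_pos hc0 hcu
  have Crp : ∀ q : ℝ, ContinuousOn (fun x : ℝ => x ^ q) (spectrum ℝ c) := fun q x hx =>
    (Real.continuousAt_rpow_const x q (Or.inl (ne_of_gt (hcpos x hx)))).continuousWithinAt
  have Clog : ContinuousOn Real.log (spectrum ℝ c) := fun x hx =>
    (Real.continuousAt_log (ne_of_gt (hcpos x hx))).continuousWithinAt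
  have Cinv : ContinuousOn (fun x : ℝ => x⁻¹) (spectrum ℝ c) :=
    continuousOn_id.inv₀ fun x hx => ne_of_gt (hcpos x hx)
  have hcid : cfc (fun x : ℝ => x) c = c := cfc_id ℝ c hcsa
  have hE0 : s * c * s = B := by
    rw [hc]; simp only [mul_assoc, cancel_mid h1, h2, mul_one]
  set T : H →L[ℂ] H := r * s' with hTd
  have hTu : IsUnit T := hru.mul hs'u
  have hTstar : star T = s' * r := by rw [hTd, star_mul, hs'sa, hrsa]
  have hcT : star T * T = c := by
    rw [hTstar, hTd, hc, ← hr2]; simp only [mul_assoc]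
  set d : H →L[ℂ] H := T * star T with hd
  have hd0 : 0 ≤ d := mul_star_self_nonneg T
  have hdu : IsUnit d := hTu.mul hTu.star
  have hdsa : IsSelfAdjoint d := hd0.isSelfAdjoint
  have hdpos : ∀ x ∈ spectrum ℝ d, 0 < x := spec_pos hd0 hdu
  have Dinv : ContinuousOn (fun x : ℝ => x⁻¹) (spectrum ℝ d) :=
    continuousOn_id.inv₀ fun x hx => ne_of_gt (hdpos x hx)
  have eT1 : T * (s * r') = 1 := by
    rw [hTd]; simp only [mul_assoc, cancel_mid h2, h3]
  have hfd : ∀ f : ℝ → ℝ, ContinuousOn f (spectrum ℝ c) →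
      cfc f d = T * cfc f c * (s * r') := by
    intro f hf
    have hint := intertwine hTu f (by rw [hcT]; exact hf)
    rw [hcT, ← hd] at hint
    calc cfc f d = cfc f d * (T * (s * r')) := by rw [eT1, mul_one]
      _ = (cfc f d * T) * (s * r') := by rw [← mul_assoc]
      _ = (T * cfc f c) * (s * r') := by rw [← hint]
  set cinv : H →L[ℂ] H := cfc (fun x : ℝ => x⁻¹) c with hcinvd
  have hRc : Ring.inverse c = cinv := ringInverse_eq_cfc_inv hc0 hcu
  have hccinv : c * cinv = 1 := by rw [← hRc]; exact Ring.mul_inverse_cancel c hcu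
  have hcinvc : cinv * c = 1 := by rw [← hRc]; exact Ring.inverse_mul_cancel c hcu
  have hBinvRaw : Ring.inverse B = s' * cinv * s' := by
    refine inv_helper ?_ ?_
    · rw [← hE0]
      simp only [mul_assoc, cancel_mid h1, cancel_mid hccinv, h1]
    · rw [← hE0]
      simp only [mul_assoc, cancel_mid h2, cancel_mid hcinvc, h2]
  have hBinv : opInv B = s' * cinv * s' := hBinvRaw
  have hAinv : opInv A = s' * s' := by
    rw [opInv]
    refine inv_helper ?_ ?_
    · rw [← hs2]; simp only [mul_assoc, cancel_mid h1, h1]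
    · rw [← hs2]; simp only [mul_assoc, cancel_mid h2, h2]
  -- E1
  have hE1 : wGeom p A B = s * cfc (fun x : ℝ => x ^ p) c * s := by
    rw [wGeom, opRpow, ← hs, ← hs', ← hc]
  -- Furuta
  have hFur : furutaEntropy p A B = s * cfc (fun x : ℝ => x ^ p * Real.log x) c * s := by
    rw [furutaEntropy, opRpow, opLog, ← hs, ← hs', ← hc, ← cfc_mul _ _ c (Crp p) Clog]
  -- Tsallis p A B
  have hTsAB : tsallisEntropy p A B = s * cfc (fun x : ℝ => p⁻¹ * (x ^ p - 1)) c * s := by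
    rw [tsallisEntropy, hE1,
      cfc_smul_sub p⁻¹ (fun x : ℝ => x ^ p) (fun _ => 1) c (Crp p) continuousOn_const,
      cfc_const_one ℝ c hcsa, conj_smul_sub, mul_one, hs2]
  -- wGeom (1-p) B A
  have hinner1 : r' * A * r' = Ring.inverse d := by
    refine (inv_helper ?_ ?_).symm
    · rw [hd, hTstar, hTd, ← hs2]
      simp only [mul_assoc, cancel_mid h2, cancel_mid h3, cancel_mid h4, cancel_mid h1, h3]
    · rw [hd, hTstar, hTd, ← hs2]
      simp only [mul_assoc, cancel_mid h2, cancel_mid h3, cancel_mid h4, cancel_mid h1, h4]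
  have hcomp1 : cfc (fun x : ℝ => x ^ (1-p)) (Ring.inverse d) = cfc (fun x : ℝ => x ^ (p-1)) d := by
    have hg : ContinuousOn (fun x : ℝ => x ^ (1-p)) ((fun x : ℝ => x⁻¹) '' spectrum ℝ d) := by
      rintro y ⟨x, hx, rfl⟩
      exact (Real.continuousAt_rpow_const _ _
        (Or.inl (ne_of_gt (inv_pos.mpr (hdpos x hx))))).continuousWithinAt
    rw [ringInverse_eq_cfc_inv hd0 hdu,
      ← cfc_comp' (fun x : ℝ => x ^ (1-p)) (fun x : ℝ => x⁻¹) d hg Dinv hdsa]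
    refine cfc_congr fun x hx => ?_
    have hx0 : (0:ℝ) < x := hdpos x hx
    show (x⁻¹) ^ (1-p) = x ^ (p-1)
    rw [Real.inv_rpow hx0.le, ← Real.rpow_neg hx0.le, show -(1-p) = p-1 by ring]
  have hchc : c * cfc (fun x : ℝ => x ^ (p-1)) c = cfc (fun x : ℝ => x ^ p) c := by
    nth_rewrite 1 [← hcid]
    rw [← cfc_mul _ _ c (continuousOn_id' _) (Crp (p-1))]
    refine cfc_congr fun x hx => ?_
    have hx0 : (0:ℝ) < x := hcpos x hx
    show x * x ^ (p-1) = x ^ p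
    conv_lhs => rw [show x * x ^ (p-1) = x ^ (1:ℝ) * x ^ (p-1) by rw [Real.rpow_one]]
    rw [← Real.rpow_add hx0]
    congr 1; ring
  have hGBA : wGeom (1-p) B A = s * cfc (fun x : ℝ => x ^ p) c * s := by
    rw [wGeom, opRpow, ← hr, ← hr', hinner1, hcomp1, hfd _ (Crp (p-1)), hTd]
    have hrrX : ∀ z : H →L[ℂ] H, r * (r * z) = s * (c * (s * z)) := fun z => by
      rw [← mul_assoc, hr2, ← hE0]; simp only [mul_assoc]
    have hcc : ∀ z : H →L[ℂ] H, c * (cfc (fun x : ℝ => x ^ (p-1)) c * z)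
        = cfc (fun x : ℝ => x ^ p) c * z := fun z => by rw [← mul_assoc, hchc]
    simp only [mul_assoc, h4, mul_one, hrrX, cancel_mid h1, hcc]
  -- Tsallis (1-p) B A
  have hTsBA : tsallisEntropy (1-p) B A
      = s * cfc (fun x : ℝ => (1-p)⁻¹ * (x ^ p - x)) c * s := by
    rw [tsallisEntropy, hGBA,
      cfc_smul_sub (1-p)⁻¹ (fun x : ℝ => x ^ p) (fun x : ℝ => x) c (Crp p) (continuousOn_id' _),
      conj_smul_sub, hcid, hE0]
  -- wGeom (1-p) B⁻¹ A⁻¹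
  have hinner2 : r * (s' * s') * r = d := by
    rw [hd, hTstar, hTd]; simp only [mul_assoc]
  have hr'r' : r' * r' = s' * (cinv * s') := by
    have e1 : Ring.inverse B = r' * r' := by
      refine inv_helper ?_ ?_
      · rw [← hr2]; simp only [mul_assoc, cancel_mid h3, h3]
      · rw [← hr2]; simp only [mul_assoc, cancel_mid h4, h4]
    rw [← e1, hBinvRaw, mul_assoc]
  have hgcinv : ∀ z : H →L[ℂ] H, cfc (fun x : ℝ => x ^ (1-p)) c * (cinv * z)
      = cfc (fun x : ℝ => x ^ (-p)) c * z := fun z => by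
    rw [← mul_assoc, hcinvd, ← cfc_mul _ _ c (Crp (1-p)) Cinv]
    congr 1
    refine cfc_congr fun x hx => ?_
    have hx0 : (0:ℝ) < x := hcpos x hx
    show x ^ (1-p) * x⁻¹ = x ^ (-p)
    rw [← Real.rpow_neg_one x, ← Real.rpow_add hx0]
    congr 1; ring
  have hE7 : wGeom (1-p) (opInv B) (opInv A) = s' * cfc (fun x : ℝ => x ^ (-p)) c * s' := by
    rw [wGeom, opSqrt_opInv hB hB', opInvSqrt_opInv hB hB', ← hr, ← hr', opRpow, hAinv,
      hinner2, hfd _ (Crp (1-p)), hTd]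
    simp only [mul_assoc, cancel_mid h4, hr'r', cancel_mid h1, hgcinv]
  -- wGeom p A⁻¹ B⁻¹
  have hE8 : wGeom p (opInv A) (opInv B) = s' * cfc (fun x : ℝ => x ^ (-p)) c * s' := by
    rw [wGeom, opSqrt_opInv hA hA', opInvSqrt_opInv hA hA', ← hs, ← hs', opRpow, hBinv]
    have hin : s * (s' * cinv * s') * s = cinv := by
      simp only [mul_assoc, cancel_mid h1, h2, mul_one, cancel_mid h2]
    rw [hin, hcinvd]
    have hg : ContinuousOn (fun x : ℝ => x ^ p) ((fun x : ℝ => x⁻¹) '' spectrum ℝ c) := by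
      rintro y ⟨x, hx, rfl⟩
      exact (Real.continuousAt_rpow_const _ _
        (Or.inl (ne_of_gt (inv_pos.mpr (hcpos x hx))))).continuousWithinAt
    rw [← cfc_comp' (fun x : ℝ => x ^ p) (fun x : ℝ => x⁻¹) c hg Cinv hcsa]
    have heq : cfc (fun x : ℝ => (x⁻¹) ^ p) c = cfc (fun x : ℝ => x ^ (-p)) c := by
      refine cfc_congr fun x hx => ?_
      have hx0 : (0:ℝ) < x := hcpos x hx
      show (x⁻¹) ^ p = x ^ (-p)
      rw [Real.inv_rpow hx0.le, ← Real.rpow_neg hx0.le]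
    rw [heq]
  -- Tsallis of inverses
  have hTs1 : tsallisEntropy (1-p) (opInv B) (opInv A)
      = s' * cfc (fun x : ℝ => (1-p)⁻¹ * (x ^ (-p) - x⁻¹)) c * s' := by
    rw [tsallisEntropy, hE7, hBinv,
      cfc_smul_sub (1-p)⁻¹ (fun x : ℝ => x ^ (-p)) (fun x : ℝ => x⁻¹) c (Crp (-p)) Cinv,
      conj_smul_sub, ← hcinvd, mul_assoc]
  have hTs2 : tsallisEntropy p (opInv A) (opInv B)
      = s' * cfc (fun x : ℝ => p⁻¹ * (x ^ (-p) - 1)) c * s' := by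
    rw [tsallisEntropy, hE8, hAinv,
      cfc_smul_sub p⁻¹ (fun x : ℝ => x ^ (-p)) (fun _ => 1) c (Crp (-p)) continuousOn_const,
      cfc_const_one ℝ c hcsa, conj_smul_sub, mul_one]
  -- collapse of conjugations
  have collapse : ∀ X Y Z : H →L[ℂ] H,
      (s * X * s) * (s' * Y * s') * (s * Z * s) = s * (X * Y * Z) * s := fun X Y Z => by
    simp only [mul_assoc, cancel_mid h1, cancel_mid h2]
  -- products
  have hP1 : wGeom p A B * tsallisEntropy (1-p) (opInv B) (opInv A) * wGeom p A B
      = s * cfc (fun x : ℝ => x ^ p * ((1-p)⁻¹ * (x ^ (-p) - x⁻¹)) * x ^ p) c * s := by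
    rw [hE1, hTs1, collapse, ← cfc_mul _ (fun x : ℝ => (1-p)⁻¹ * (x ^ (-p) - x⁻¹)) c (Crp p)
        (continuousOn_const.mul ((Crp (-p)).sub Cinv)),
      ← cfc_mul (fun x : ℝ => x ^ p * ((1-p)⁻¹ * (x ^ (-p) - x⁻¹))) _ c ((Crp p).mul (continuousOn_const.mul ((Crp (-p)).sub Cinv))) (Crp p)]
  have hP2 : wGeom p A B * tsallisEntropy p (opInv A) (opInv B) * wGeom p A B
      = s * cfc (fun x : ℝ => x ^ p * (p⁻¹ * (x ^ (-p) - 1)) * x ^ p) c * s := by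
    rw [hE1, hTs2, collapse, ← cfc_mul _ (fun x : ℝ => p⁻¹ * (x ^ (-p) - 1)) c (Crp p)
        (continuousOn_const.mul ((Crp (-p)).sub continuousOn_const)),
      ← cfc_mul (fun x : ℝ => x ^ p * (p⁻¹ * (x ^ (-p) - 1))) _ c ((Crp p).mul
        (continuousOn_const.mul ((Crp (-p)).sub continuousOn_const))) (Crp p)]
  -- continuity of the combined functions
  have Cf1 : ContinuousOn (fun x : ℝ => x ^ p * ((1-p)⁻¹ * (x ^ (-p) - x⁻¹)) * x ^ p)
      (spectrum ℝ c) := ((Crp p).mul (continuousOn_const.mul ((Crp (-p)).sub Cinv))).mul (Crp p)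
  have Cf2 : ContinuousOn (fun x : ℝ => p⁻¹ * (x ^ p - 1)) (spectrum ℝ c) :=
    continuousOn_const.mul ((Crp p).sub continuousOn_const)
  have Cg1 : ContinuousOn (fun x : ℝ => (1-p)⁻¹ * (x ^ p - x)) (spectrum ℝ c) :=
    continuousOn_const.mul ((Crp p).sub (continuousOn_id' _))
  have Cg2 : ContinuousOn (fun x : ℝ => x ^ p * (p⁻¹ * (x ^ (-p) - 1)) * x ^ p)
      (spectrum ℝ c) :=
    ((Crp p).mul (continuousOn_const.mul ((Crp (-p)).sub continuousOn_const))).mul (Crp p)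
  have CG : ContinuousOn (fun x : ℝ => x ^ p * Real.log x) (spectrum ℝ c) := (Crp p).mul Clog
  constructor
  · rw [hP1, hTsAB, hFur, ← conj_smul_add,
      ← cfc_smul_add (1/2 : ℝ) _ _ c Cf1 Cf2]
    have hmono : cfc (fun x : ℝ => (1/2 : ℝ) *
        (x ^ p * ((1-p)⁻¹ * (x ^ (-p) - x⁻¹)) * x ^ p + p⁻¹ * (x ^ p - 1))) c
        ≤ cfc (fun x : ℝ => x ^ p * Real.log x) c := by
      refine cfc_mono (fun x hx => (scalar_facts hp0 hp1 (hcpos x hx)).1)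
        (continuousOn_const.mul (Cf1.add Cf2)) CG
    have := star_left_conjugate_le_conjugate hmono s
    rw [hssa] at this
    exact this
  · rw [hP2, hTsBA, hFur, ← conj_smul_negsub,
      ← cfc_smul_negsub (1/2 : ℝ) _ _ c Cg1 Cg2]
    have hmono : cfc (fun x : ℝ => x ^ p * Real.log x) c
        ≤ cfc (fun x : ℝ => (1/2 : ℝ) *
          (-((1-p)⁻¹ * (x ^ p - x)) - x ^ p * (p⁻¹ * (x ^ (-p) - 1)) * x ^ p)) c := by
      refine cfc_mono (fun x hx => (scalar_facts hp0 hp1 (hcpos x hx)).2) CG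
        (continuousOn_const.mul (Cg1.neg.sub Cg2))
    have := star_left_conjugate_le_conjugate hmono s
    rw [hssa] at this
    exact this
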